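/- From pointwise conditional-regret bounds to H-consistency bounds (Appendix Theorem B.1): let L be any surrogate loss, i.e. a function L(h,x,y) ≥ 0 measurable in x, and define conditional errors C_L(h,x) = Σ_{y∈[n]} p(x,y)·L(h,x,y), best-in-class conditional errors C*_L(H,x) = inf_{h∈H} C_L(h,x), and conditional regrets ΔC_{L,H}(h,x) = C_L(h,x) − C*_L(H,x); define the same quantities for the deferral loss L_def. Let Γ : [0,∞) → [0,∞) be concave. If ΔC_{L_def,H}(h,x) ≤ Γ( ΔC_{L,H}(h,x) ) for all h ∈ H and x ∈ X, and if for the given h ∈ H the functions x ↦ ΔC_{L,H}(h,x) and x ↦ ΔC_{L_def,H}(h,x) are μ-integrable (in particular E*_L(H), E*_{L_def}(H), M_L(H), M_{L_def}(H) are finite), then E_{L_def}(h) − E*_{L_def}(H) + M_{L_def}(H) ≤ Γ( E_L(h) − E*_L(H) + M_L(H) ). -/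

import Mathlib

open MeasureTheory

/-- Softmax of a score vector. -/
noncomputable def smax {m : ℕ} (v : Fin m → ℝ) (y : Fin m) : ℝ :=
  Real.exp (v y) / ∑ y' : Fin m, Real.exp (v y')

/-- Deferral loss `L_def(h,x,y) = 1_{𝗁(x)≠y}·1_{𝗁(x)∈[n]} + c(x,y)·1_{𝗁(x)=n+1}`,
where the prediction `𝗁(x) = pred (h x)` and `Fin.last n` is the deferral label. -/
noncomputable def defLoss {X : Type*} {n : ℕ} (pred : (Fin (n + 1) → ℝ) → Fin (n + 1))
    (c : X → Fin n → ℝ) (h : X → Fin (n + 1) → ℝ) (x : X) (y : Fin n) : ℝ :=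
  (if pred (h x) ≠ y.castSucc ∧ pred (h x) ≠ Fin.last n then 1 else 0)
    + c x y * (if pred (h x) = Fin.last n then 1 else 0)

/-- RL2D surrogate loss
`L_Ψ(h,x,y) = c(x,y)·Ψ(s_y(x;h)) + (1 − c(x,y))·Ψ(s_y(x;h) + s_{n+1}(x;h))`. -/
noncomputable def surLoss {X : Type*} {n : ℕ} (Ψ : ℝ → ℝ) (c : X → Fin n → ℝ)
    (h : X → Fin (n + 1) → ℝ) (x : X) (y : Fin n) : ℝ :=
  c x y * Ψ (smax (h x) y.castSucc)
    + (1 - c x y) * Ψ (smax (h x) y.castSucc + smax (h x) (Fin.last n))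

/-- Conditional error `C_L(h,x) = Σ_{y∈[n]} p(x,y)·L(h,x,y)`. -/
noncomputable def condErr {X : Type*} {n : ℕ} (p : X → Fin n → ℝ)
    (L : (X → Fin (n + 1) → ℝ) → X → Fin n → ℝ) (h : X → Fin (n + 1) → ℝ) (x : X) : ℝ :=
  ∑ y : Fin n, p x y * L h x y

/-- Generalization error `E_L(h) = ∫ Σ_{y∈[n]} p(x,y)·L(h,x,y) dμ(x)`. -/
noncomputable def genErr {X : Type*} [MeasurableSpace X] {n : ℕ} (μ : Measure X)
    (p : X → Fin n → ℝ) (L : (X → Fin (n + 1) → ℝ) → X → Fin n → ℝ)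
    (h : X → Fin (n + 1) → ℝ) : ℝ :=
  ∫ x, condErr p L h x ∂μ

/-- Best-in-class generalization error `E*_L(H) = inf_{h∈H} E_L(h)`. -/
noncomputable def bestErr {X : Type*} [MeasurableSpace X] {n : ℕ} (μ : Measure X)
    (p : X → Fin n → ℝ) (L : (X → Fin (n + 1) → ℝ) → X → Fin n → ℝ)
    (H : Set (X → Fin (n + 1) → ℝ)) : ℝ :=
  sInf ((genErr μ p L) '' H)

/-- Minimizability gap `M_L(H) = E*_L(H) − ∫ inf_{h∈H} C_L(h,x) dμ(x)`. -/
noncomputable def minGap {X : Type*} [MeasurableSpace X] {n : ℕ} (μ : Measure X)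
    (p : X → Fin n → ℝ) (L : (X → Fin (n + 1) → ℝ) → X → Fin n → ℝ)
    (H : Set (X → Fin (n + 1) → ℝ)) : ℝ :=
  bestErr μ p L H - ∫ x, sInf ((fun h => condErr p L h x) '' H) ∂μ

/-- `H` is symmetric: there is a family `F` of functions `X → ℝ` such that for every
`x`, `{(h(x,1),…,h(x,n+1)) : h ∈ H} = {(f₁(x),…,f_{n+1}(x)) : f₁,…,f_{n+1} ∈ F}`. -/
def SymmetricHyp {X : Type*} {n : ℕ} (H : Set (X → Fin (n + 1) → ℝ)) : Prop :=
  ∃ F : Set (X → ℝ), ∀ x : X,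
    (fun h : X → Fin (n + 1) → ℝ => h x) '' H =
      {v : Fin (n + 1) → ℝ |
        ∃ f : Fin (n + 1) → X → ℝ, (∀ k, f k ∈ F) ∧ v = fun k => f k x}

/-- `H` is complete: for every `x` and `y`, `{h(x,y) : h ∈ H} = ℝ`. -/
def CompleteHyp {X : Type*} {n : ℕ} (H : Set (X → Fin (n + 1) → ℝ)) : Prop :=
  ∀ (x : X) (y : Fin (n + 1)),
    (fun h : X → Fin (n + 1) → ℝ => h x y) '' H = Set.univ

/-- from pointwise conditional-regret bounds to H-consistency bounds
(Appendix Theorem B.1).  Let `L` be any nonnegative surrogate loss, measurable in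
`x`, and let `Γ : [0,∞) → [0,∞)` be concave.  If
`ΔC_def(h',x) ≤ Γ(ΔC_{L}(h',x))` for all `h' ∈ H` and `x`, and the conditional
errors and pointwise best-in-class conditional errors of both losses are
`μ`-integrable for the given `h ∈ H` (so that the conditional regrets
`x ↦ ΔC(h,x)` are integrable and `E*`, `M` are finite), then
`E_def(h) − E*_def(H) + M_def(H) ≤ Γ( E_L(h) − E*_L(H) + M_L(H) )`. -/
lemma concave_supporting_line {Γ : ℝ → ℝ} (hΓ : ConcaveOn ℝ (Set.Ici (0:ℝ)) Γ)
    {t₀ : ℝ} (ht₀ : 0 < t₀) :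
    ∃ s : ℝ, ∀ t, 0 ≤ t → Γ t ≤ Γ t₀ + s * (t - t₀) := by
  set S : Set ℝ := (fun a => (Γ t₀ - Γ a) / (t₀ - a)) '' Set.Ico 0 t₀ with hS
  have hne : S.Nonempty := ⟨_, ⟨0, ⟨le_refl 0, ht₀⟩, rfl⟩⟩
  have hmem : ∀ a, 0 ≤ a → a < t₀ → (Γ t₀ - Γ a) / (t₀ - a) ∈ S :=
    fun a h1 h2 => ⟨a, ⟨h1, h2⟩, rfl⟩
  have hbdd : BddBelow S := by
    refine ⟨(Γ (t₀ + 1) - Γ t₀) / (t₀ + 1 - t₀), ?_⟩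
    rintro u ⟨a, ⟨ha0, hat⟩, rfl⟩
    exact hΓ.slope_anti_adjacent ha0 (by simp only [Set.mem_Ici]; linarith) hat (by linarith)
  refine ⟨sInf S, fun t ht => ?_⟩
  rcases lt_trichotomy t t₀ with hlt | heq | hgt
  · have h1 : sInf S ≤ (Γ t₀ - Γ t) / (t₀ - t) := csInf_le hbdd (hmem t ht hlt)
    have h2 : sInf S * (t₀ - t) ≤ Γ t₀ - Γ t :=
      (le_div_iff₀ (sub_pos.mpr hlt)).mp h1
    linarith
  · simp [heq]
  · have h1 : (Γ t - Γ t₀) / (t - t₀) ≤ sInf S := by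
      refine le_csInf hne ?_
      rintro u ⟨a, ⟨ha0, hat⟩, rfl⟩
      exact hΓ.slope_anti_adjacent ha0 (le_of_lt (ht₀.trans hgt)) hat hgt
    have h2 : Γ t - Γ t₀ ≤ sInf S * (t - t₀) := by
      rw [div_le_iff₀ (by linarith)] at h1
      linarith
    linarith

lemma concave_jensen_transfer {X : Type*} [MeasurableSpace X] (μ : Measure X)
    [IsProbabilityMeasure μ] (Γ : ℝ → ℝ) (hΓ : ConcaveOn ℝ (Set.Ici (0:ℝ)) Γ)
    (f g : X → ℝ) (hf : Integrable f μ) (hg : Integrable g μ)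
    (hg0 : ∀ x, 0 ≤ g x) (hfg : ∀ x, f x ≤ Γ (g x)) :
    ∫ x, f x ∂μ ≤ Γ (∫ x, g x ∂μ) := by
  set t₀ := ∫ x, g x ∂μ with ht₀
  have ht₀0 : 0 ≤ t₀ := integral_nonneg hg0
  rcases eq_or_lt_of_le ht₀0 with hz | hpos
  · -- t₀ = 0, so g = 0 a.e.
    have hg0ae : g =ᵐ[μ] 0 := by
      rw [← MeasureTheory.integral_eq_zero_iff_of_nonneg hg0 hg]
      exact hz.symm
    have hle : f ≤ᵐ[μ] fun _ => Γ 0 := by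
      filter_upwards [hg0ae] with x hx
      calc f x ≤ Γ (g x) := hfg x
        _ = Γ 0 := by rw [show g x = 0 from hx]
    calc ∫ x, f x ∂μ ≤ ∫ _, Γ 0 ∂μ := integral_mono_ae hf (integrable_const _) hle
      _ = Γ 0 := by simp
      _ = Γ t₀ := by rw [← hz]
  · obtain ⟨s, hs⟩ := concave_supporting_line hΓ hpos
    have hint : Integrable (fun x => Γ t₀ + s * (g x - t₀)) μ :=
      (integrable_const _).add ((hg.sub (integrable_const _)).const_mul s)
    calc ∫ x, f x ∂μ ≤ ∫ x, Γ t₀ + s * (g x - t₀) ∂μ := by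
          refine integral_mono hf hint fun x => ?_
          exact (hfg x).trans (hs (g x) (hg0 x))
      _ = Γ t₀ := by
          have he : (fun x => Γ t₀ + s * (g x - t₀)) = fun x => (Γ t₀ - s * t₀) + s * g x := by
            funext x; ring
          rw [he, integral_add (integrable_const _) (hg.const_mul s), integral_const,
            integral_const_mul, ← ht₀]
          simp only [measure_univ, ENNReal.toReal_one, probReal_univ, one_smul]
          ring

theorem regret_transfer {X : Type*} [MeasurableSpace X] (μ : Measure X)
    [IsProbabilityMeasure μ] (n : ℕ) (hn : 2 ≤ n)
    (p : X → Fin n → ℝ) (hpmeas : ∀ y, Measurable fun x => p x y)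
    (hp0 : ∀ x y, 0 ≤ p x y) (hp1 : ∀ x, ∑ y : Fin n, p x y = 1)
    (c : X → Fin n → ℝ) (hcmeas : ∀ y, Measurable fun x => c x y)
    (hc : ∀ x y, c x y ∈ Set.Icc (0 : ℝ) 1)
    (pred : (Fin (n + 1) → ℝ) → Fin (n + 1))
    (hpred : ∀ (v : Fin (n + 1) → ℝ) (j : Fin (n + 1)), v j ≤ v (pred v))
    (hpredmeas : Measurable pred)
    (H : Set (X → Fin (n + 1) → ℝ)) (hHmeas : ∀ h ∈ H, Measurable h)
    (L : (X → Fin (n + 1) → ℝ) → X → Fin n → ℝ)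
    (hL0 : ∀ h' x y, 0 ≤ L h' x y)
    (hLmeas : ∀ h' ∈ H, ∀ y : Fin n, Measurable fun x => L h' x y)
    (Γ : ℝ → ℝ) (hΓ : ConcaveOn ℝ (Set.Ici (0 : ℝ)) Γ)
    (hΓ0 : ∀ t, 0 ≤ t → 0 ≤ Γ t)
    (hpt : ∀ h' ∈ H, ∀ x : X,
      condErr p (defLoss pred c) h' x
          - sInf ((fun h'' => condErr p (defLoss pred c) h'' x) '' H) ≤
        Γ (condErr p L h' x - sInf ((fun h'' => condErr p L h'' x) '' H)))
    (h : X → Fin (n + 1) → ℝ) (hh : h ∈ H)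
    (hint₁ : Integrable (condErr p L h) μ)
    (hint₂ : Integrable (fun x => sInf ((fun h'' => condErr p L h'' x) '' H)) μ)
    (hint₃ : Integrable (condErr p (defLoss pred c) h) μ)
    (hint₄ : Integrable
      (fun x => sInf ((fun h'' => condErr p (defLoss pred c) h'' x) '' H)) μ) :
    genErr μ p (defLoss pred c) h - bestErr μ p (defLoss pred c) H
        + minGap μ p (defLoss pred c) H ≤
      Γ (genErr μ p L h - bestErr μ p L H + minGap μ p L H) := by
  have hbddL : ∀ x, BddBelow ((fun h'' => condErr p L h'' x) '' H) := by
    intro x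
    refine ⟨0, ?_⟩
    rintro u ⟨h'', _, rfl⟩
    exact Finset.sum_nonneg fun y _ => mul_nonneg (hp0 x y) (hL0 h'' x y)
  have hbddD : ∀ x, BddBelow ((fun h'' => condErr p (defLoss pred c) h'' x) '' H) := by
    intro x
    refine ⟨0, ?_⟩
    rintro u ⟨h'', _, rfl⟩
    refine Finset.sum_nonneg fun y _ => mul_nonneg (hp0 x y) ?_
    have := (hc x y).1
    unfold defLoss
    refine add_nonneg (by split <;> norm_num) (mul_nonneg this (by split <;> norm_num))
  set f : X → ℝ := fun x => condErr p (defLoss pred c) h x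
      - sInf ((fun h'' => condErr p (defLoss pred c) h'' x) '' H) with hfdef
  set g : X → ℝ := fun x => condErr p L h x
      - sInf ((fun h'' => condErr p L h'' x) '' H) with hgdef
  have hg0 : ∀ x, 0 ≤ g x := fun x =>
    sub_nonneg.mpr (csInf_le (hbddL x) ⟨h, hh, rfl⟩)
  have key : ∫ x, f x ∂μ ≤ Γ (∫ x, g x ∂μ) :=
    concave_jensen_transfer μ Γ hΓ f g (hint₃.sub hint₄) (hint₁.sub hint₂) hg0
      (fun x => hpt h hh x)
  have hif : ∫ x, f x ∂μ = genErr μ p (defLoss pred c) h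
      - ∫ x, sInf ((fun h'' => condErr p (defLoss pred c) h'' x) '' H) ∂μ :=
    integral_sub hint₃ hint₄
  have hig : ∫ x, g x ∂μ = genErr μ p L h
      - ∫ x, sInf ((fun h'' => condErr p L h'' x) '' H) ∂μ :=
    integral_sub hint₁ hint₂
  rw [hif, hig] at key
  have e1 : genErr μ p (defLoss pred c) h - bestErr μ p (defLoss pred c) H
      + minGap μ p (defLoss pred c) H = genErr μ p (defLoss pred c) h
      - ∫ x, sInf ((fun h'' => condErr p (defLoss pred c) h'' x) '' H) ∂μ := by
    unfold minGap; ring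
  have e2 : genErr μ p L h - bestErr μ p L H + minGap μ p L H = genErr μ p L h
      - ∫ x, sInf ((fun h'' => condErr p L h'' x) '' H) ∂μ := by
    unfold minGap; ring
  rw [e1, e2]
  exact key
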